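/- Localized toric blow-up identity for the χ_{-y} genus: for pairwise 'generic' nonzero complex numbers x₁,…,x_{N+1} (all ratios xⱼ/xᵢ ≠ 1 and ≠ y^{±1} as needed) and y a nontrivial N-th root of unity, ∏_{i=1}^{N+1} (1 - y/xᵢ)/(1 - 1/xᵢ) = Σ_{i=1}^{N+1} (1 - y/xᵢ)/(1 - 1/xᵢ) · ∏_{j≠i} (1 - y xᵢ/xⱼ)/(1 - xᵢ/xⱼ). (This is the q = 0 specialization of the theta-function blow-up identity for elliptic genus.) -/

import Mathlib

open Polynomial Finset

lemma interp_key {n : ℕ} (v w : Fin n → ℂ) (hv : Function.Injective v) (t : ℂ) :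
    (∏ j, (w j - t)) - (∏ j, (v j - t)) =
      ∑ i, (∏ j, (w j - v i)) * ∏ j ∈ univ.erase i, ((v i - v j)⁻¹ * (t - v j)) := by
  have hMw : (∏ j, (X - C (w j)) : ℂ[X]).Monic :=
    monic_prod_of_monic _ _ fun j _ => monic_X_sub_C _
  have hMv : (∏ j, (X - C (v j)) : ℂ[X]).Monic :=
    monic_prod_of_monic _ _ fun j _ => monic_X_sub_C _
  have hdw : (∏ j, (X - C (w j)) : ℂ[X]).degree = n := by
    rw [degree_prod]
    simp [degree_X_sub_C]
  have hdv : (∏ j, (X - C (v j)) : ℂ[X]).degree = n := by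
    rw [degree_prod]
    simp [degree_X_sub_C]
  set f : ℂ[X] := C ((-1 : ℂ) ^ n) * ((∏ j, (X - C (w j))) - ∏ j, (X - C (v j))) with hf
  have hdeg : f.degree < (#(univ : Finset (Fin n)) : ℕ) := by
    rw [card_univ, Fintype.card_fin]
    rcases eq_or_ne ((∏ j, (X - C (w j)) : ℂ[X])) (∏ j, (X - C (v j))) with h | h
    · simp [hf, h]
    · calc f.degree ≤ ((∏ j, (X - C (w j))) - ∏ j, (X - C (v j)) : ℂ[X]).degree :=
            le_of_eq (degree_C_mul (pow_ne_zero _ (neg_ne_zero.mpr one_ne_zero)))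
        _ < (n : WithBot ℕ) := by
            rw [← hdw]
            exact degree_sub_lt (hdw.trans hdv.symm) hMw.ne_zero
              (hMw.leadingCoeff.trans hMv.leadingCoeff.symm)
  have hInt := Lagrange.eq_interpolate (v := v) (s := univ) (f := f) (hv.injOn) hdeg
  have := congrArg (eval t) hInt
  rw [Lagrange.interpolate_apply] at this
  simp only [eval_finset_sum, eval_mul, eval_C] at this
  have hneg : ∀ (u : Fin n → ℂ) (s : ℂ), (-1 : ℂ) ^ n * ∏ j, (s - u j) = ∏ j, (u j - s) := by
    intro u s
    calc (-1 : ℂ) ^ n * ∏ j, (s - u j) = ∏ j : Fin n, ((-1) * (s - u j)) := by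
          rw [prod_mul_distrib, prod_const, card_univ, Fintype.card_fin]
      _ = ∏ j, (u j - s) := prod_congr rfl fun j _ => by ring
  have hevalf : ∀ s : ℂ, eval s f = (∏ j, (w j - s)) - ∏ j, (v j - s) := by
    intro s
    rw [hf]
    simp only [eval_mul, eval_C, eval_sub, eval_prod, eval_X]
    rw [mul_sub, hneg, hneg]
  have hbasis : ∀ i, eval t (Lagrange.basis univ v i) =
      ∏ j ∈ univ.erase i, ((v i - v j)⁻¹ * (t - v j)) := by
    intro i
    simp [Lagrange.basis, Lagrange.basisDivisor, eval_prod]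
  have hvz : ∀ i : Fin n, (∏ j, (v j - v i)) = 0 :=
    fun i => prod_eq_zero (mem_univ i) (sub_self _)
  rw [hevalf t] at this
  rw [this]
  refine sum_congr rfl fun i _ => ?_
  rw [hevalf (v i), hvz, sub_zero, hbasis]



/-- Localized toric blow-up identity for the χ_{-y} genus: for generic nonzero
x₁,…,x_{N+1} and y a nontrivial N-th root of unity,
∏ᵢ (1 - y/xᵢ)/(1 - 1/xᵢ) = Σᵢ (1 - y/xᵢ)/(1 - 1/xᵢ)·∏_{j≠i}(1 - y xᵢ/xⱼ)/(1 - xᵢ/xⱼ). -/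
theorem blowup_identity_chi_y (N : ℕ) (hN : 1 ≤ N) (y : ℂ)
    (hyN : y ^ N = 1) (hy1 : y ≠ 1)
    (x : Fin (N + 1) → ℂ) (hx0 : ∀ i, x i ≠ 0) (hx1 : ∀ i, x i ≠ 1)
    (hxd : ∀ i j, i ≠ j → x i ≠ x j) :
    (∏ i, (1 - y / x i) / (1 - 1 / x i))
      = ∑ i, (1 - y / x i) / (1 - 1 / x i) *
          ∏ j ∈ Finset.univ.erase i, (1 - y * x i / x j) / (1 - x i / x j) := by
  have hy0 : y ≠ 0 := by
    intro h
    rw [h, zero_pow (by omega : N ≠ 0)] at hyN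
    exact zero_ne_one hyN
  have hyN1 : y ^ (N + 1) = y := by rw [pow_succ, hyN, one_mul]
  have h1y : (1 : ℂ) - y ≠ 0 := sub_ne_zero.mpr (Ne.symm hy1)
  have hx1s : ∀ i, x i - 1 ≠ 0 := fun i => sub_ne_zero.mpr (hx1 i)
  have hxs : ∀ i j : Fin (N + 1), j ≠ i → x j - x i ≠ 0 :=
    fun i j h => sub_ne_zero.mpr (hxd j i h)
  have hinj : Function.Injective x := fun a b hab => by
    by_contra hne; exact hxd a b hne hab
  set P : Fin (N + 1) → ℂ :=
    fun i => ∏ j ∈ univ.erase i, ((x j - y * x i) / (x j - x i)) with hPdef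
  -- key product computation
  have hA : ∀ i, (∏ j, (x j / y - x i)) =
      (1 - y) / y * x i * ∏ j ∈ univ.erase i, (x j - y * x i) := by
    intro i
    rw [← Finset.prod_erase_mul univ _ (mem_univ i)]
    have h1 : ∏ j ∈ univ.erase i, (x j / y - x i)
        = ∏ j ∈ univ.erase i, ((x j - y * x i) * y⁻¹) :=
      prod_congr rfl fun j _ => by field_simp
    rw [h1, prod_mul_distrib, prod_const, card_erase_of_mem (mem_univ i), card_univ,
      Fintype.card_fin, Nat.add_sub_cancel, inv_pow, hyN, inv_one, mul_one]
    field_simp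
  -- C0 : ∑ i, P i = 1
  have C0 : ∑ i, P i = 1 := by
    have k0 := interp_key x (fun j => x j / y) hinj 0
    have lhs0 : (∏ j, (x j / y - 0)) - ∏ j, (x j - 0)
        = ((1 - y) / y * ∏ j, x j) := by
      have h1 : ∏ j : Fin (N + 1), (x j / y - 0) = ∏ j : Fin (N + 1), (x j * y⁻¹) :=
        prod_congr rfl fun j _ => by field_simp; simp
      rw [h1, prod_mul_distrib, prod_const, card_univ, Fintype.card_fin,
        inv_pow, hyN1]
      simp only [sub_zero]
      field_simp
    have rhs0 : ∀ i : Fin (N + 1),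
        (∏ j, (x j / y - x i)) * ∏ j ∈ univ.erase i, ((x i - x j)⁻¹ * (0 - x j))
          = ((1 - y) / y * ∏ j, x j) * P i := by
      intro i
      have e2 : ∏ j ∈ univ.erase i, ((x i - x j)⁻¹ * (0 - x j))
          = ∏ j ∈ univ.erase i, (x j / (x j - x i)) :=
        prod_congr rfl fun j hj => by
          have h1 := hxs i j (mem_erase.mp hj).1
          have h2 : x i - x j ≠ 0 :=
            sub_ne_zero.mpr (hxd i j (Ne.symm (mem_erase.mp hj).1))
          field_simp
          ring
      have comb : (∏ j ∈ univ.erase i, (x j - y * x i)) *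
            ∏ j ∈ univ.erase i, (x j / (x j - x i))
          = (∏ j ∈ univ.erase i, x j) * P i := by
        show _ = (∏ j ∈ univ.erase i, x j) *
          ∏ j ∈ univ.erase i, ((x j - y * x i) / (x j - x i))
        rw [← prod_mul_distrib, ← prod_mul_distrib]
        exact prod_congr rfl fun j hj => by ring
      have hxprod : x i * ∏ j ∈ univ.erase i, x j = ∏ j, x j :=
        Finset.mul_prod_erase univ x (mem_univ i)
      rw [hA i, e2]
      linear_combination ((1 - y) / y * x i) * comb + ((1 - y) / y * P i) * hxprod
    rw [lhs0, sum_congr rfl fun i _ => rhs0 i, ← mul_sum] at k0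
    have hc : ((1 - y) / y * ∏ j, x j) ≠ 0 :=
      mul_ne_zero (div_ne_zero h1y hy0) (prod_ne_zero_iff.mpr fun j _ => hx0 j)
    exact mul_left_cancel₀ hc (by rw [mul_one]; exact k0.symm)
  -- C1
  set S : ℂ := ∑ i, x i * P i / (x i - 1) with hSdef
  set Py : ℂ := ∏ j, (x j - y) with hPy
  set Pr : ℂ := ∏ j, (x j - 1) with hPr
  have C1 : Py = y * Pr + (1 - y) * Pr * S := by
    have k1 := interp_key x (fun j => x j / y) hinj 1
    have lhs1 : ∏ j : Fin (N + 1), (x j / y - 1) = Py * y⁻¹ := by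
      have h1 : ∏ j : Fin (N + 1), (x j / y - 1) = ∏ j : Fin (N + 1), ((x j - y) * y⁻¹) :=
        prod_congr rfl fun j _ => by field_simp
      rw [h1, prod_mul_distrib, prod_const, card_univ, Fintype.card_fin, inv_pow, hyN1,
        hPy]
    have rhs1 : ∀ i : Fin (N + 1),
        (∏ j, (x j / y - x i)) * ∏ j ∈ univ.erase i, ((x i - x j)⁻¹ * (1 - x j))
          = ((1 - y) / y * Pr) * (x i * P i / (x i - 1)) := by
      intro i
      have e2 : ∏ j ∈ univ.erase i, ((x i - x j)⁻¹ * (1 - x j))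
          = ∏ j ∈ univ.erase i, ((x j - 1) / (x j - x i)) :=
        prod_congr rfl fun j hj => by
          have h1 := hxs i j (mem_erase.mp hj).1
          have h2 : x i - x j ≠ 0 :=
            sub_ne_zero.mpr (hxd i j (Ne.symm (mem_erase.mp hj).1))
          field_simp
          ring
      have comb1 : (∏ j ∈ univ.erase i, (x j - y * x i)) *
            ∏ j ∈ univ.erase i, ((x j - 1) / (x j - x i))
          = (∏ j ∈ univ.erase i, (x j - 1)) * P i := by
        show _ = (∏ j ∈ univ.erase i, (x j - 1)) *
          ∏ j ∈ univ.erase i, ((x j - y * x i) / (x j - x i))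
        rw [← prod_mul_distrib, ← prod_mul_distrib]
        exact prod_congr rfl fun j hj => by ring
      have e3 : (x i - 1) * ∏ j ∈ univ.erase i, (x j - 1) = Pr :=
        Finset.mul_prod_erase univ (fun j => x j - 1) (mem_univ i)
      rw [hA i, e2, ← mul_div_assoc, eq_div_iff (hx1s i)]
      linear_combination ((1 - y) / y * x i * (x i - 1)) * comb1 +
        ((1 - y) / y * x i * P i) * e3
    rw [lhs1, sum_congr rfl fun i _ => rhs1 i, ← mul_sum, ← hSdef] at k1
    have hA1 : y * (Py * y⁻¹) = Py := by field_simp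
    have hc1 : y * ((1 - y) / y) = 1 - y := by field_simp
    linear_combination y * k1 - hA1 + Pr * S * hc1
  -- rewrite the goal
  have fac1 : ∀ i, (1 - y / x i) / (1 - 1 / x i) = (x i - y) / (x i - 1) := by
    intro i
    rw [show (1 : ℂ) - y / x i = (x i - y) / x i from by field_simp [hx0 i],
      show (1 : ℂ) - 1 / x i = (x i - 1) / x i from by field_simp [hx0 i],
      div_div_div_cancel_right₀ (hx0 i)]
  have hL : (∏ i, (1 - y / x i) / (1 - 1 / x i)) = Py / Pr := by
    rw [hPy, hPr, ← prod_div_distrib]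
    exact prod_congr rfl fun i _ => fac1 i
  have hR : ∀ i : Fin (N + 1), (1 - y / x i) / (1 - 1 / x i) *
        ∏ j ∈ Finset.univ.erase i, (1 - y * x i / x j) / (1 - x i / x j)
      = (x i - y) / (x i - 1) * P i := by
    intro i
    rw [fac1 i]
    congr 1
    refine prod_congr rfl fun j hj => ?_
    have h1 := hxs i j (mem_erase.mp hj).1
    rw [show (1 : ℂ) - y * x i / x j = (x j - y * x i) / x j from by field_simp [hx0 j],
      show (1 : ℂ) - x i / x j = (x j - x i) / x j from by field_simp [hx0 j],
      div_div_div_cancel_right₀ (hx0 j)]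
  rw [hL, sum_congr rfl fun i _ => hR i]
  have hRsum : ∑ i, (x i - y) / (x i - 1) * P i = (1 - y) * S + y * ∑ i, P i := by
    rw [hSdef, mul_sum, mul_sum, ← sum_add_distrib]
    refine sum_congr rfl fun i _ => ?_
    field_simp [hx1s i]
    ring
  rw [hRsum, C0, mul_one, div_eq_iff (show Pr ≠ 0 from hPr ▸ prod_ne_zero_iff.mpr fun j _ => hx1s j)]
  linear_combination C1
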